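/- Deterministic linear-rate recursion lemma: let α ≥ 0, p ∈ (0,1], and η be a real number with 0 < η ≤ min{ 1/(1 + 8α), p/2 }. Suppose (a_t)_{t≥0} and (y_t)_{t≥0} are sequences of nonnegative reals satisfying a_{t+1} ≤ ((1−η)² + 2η²α)·a_t + 2η²α·y_t and y_{t+1} ≤ p·a_t + (1−p)·y_t for all t ≥ 0. Then a_t ≤ (1−η)^t · (a_0 + y_0) for all t ≥ 0. -/

import Mathlib

/-- deterministic linear-rate recursion lemma:
if `α ≥ 0`, `p ∈ (0,1]`, `0 < η ≤ min{1/(1+8α), p/2}`, and the nonnegative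
sequences `(aₜ)`, `(yₜ)` satisfy
`a_{t+1} ≤ ((1−η)² + 2η²α)·aₜ + 2η²α·yₜ` and `y_{t+1} ≤ p·aₜ + (1−p)·yₜ`,
then `aₜ ≤ (1−η)ᵗ·(a₀ + y₀)` for all `t`. -/
theorem linear_rate_recursion (α p η : ℝ) (hα : 0 ≤ α) (hp0 : 0 < p) (hp1 : p ≤ 1)
    (hη0 : 0 < η) (hη : η ≤ min (1 / (1 + 8 * α)) (p / 2))
    (a y : ℕ → ℝ) (ha : ∀ t, 0 ≤ a t) (hy : ∀ t, 0 ≤ y t)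
    (hrec_a : ∀ t, a (t + 1) ≤ ((1 - η) ^ 2 + 2 * η ^ 2 * α) * a t
        + 2 * η ^ 2 * α * y t)
    (hrec_y : ∀ t, y (t + 1) ≤ p * a t + (1 - p) * y t) :
    ∀ t, a t ≤ (1 - η) ^ t * (a 0 + y 0) := by
  have hηp : η ≤ p / 2 := le_trans hη (min_le_right _ _)
  have hηa : η ≤ 1 / (1 + 8 * α) := le_trans hη (min_le_left _ _)
  have hden : (0:ℝ) < 1 + 8 * α := by linarith
  have hηa' : η * (1 + 8 * α) ≤ 1 := by
    rw [le_div_iff₀ hden] at hηa; linarith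
  set c := 4 * η ^ 2 * α / p with hc
  have hc0 : 0 ≤ c := by positivity
  have hcp : c * p = 4 * η ^ 2 * α := by rw [hc]; exact div_mul_cancel₀ _ hp0.ne'
  have hηα : 0 ≤ η * α := mul_nonneg hη0.le hα
  have hcle : c ≤ 2 * η * α := by
    rw [hc, div_le_iff₀ hp0]
    nlinarith
  have hc1 : c ≤ 1 := by nlinarith
  have hη1 : 0 ≤ 1 - η := by linarith
  -- coefficient inequalities
  have K1 : (1 - η) ^ 2 + 2 * η ^ 2 * α + c * p ≤ 1 - η := by
    rw [hcp]; nlinarith [mul_nonneg hη0.le hηα]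
  have K2 : 2 * η ^ 2 * α + c * (1 - p) ≤ c * (1 - η) := by
    nlinarith [hcp]
  have key : ∀ t, a t + c * y t ≤ (1 - η) ^ t * (a 0 + y 0) := by
    intro t
    induction t with
    | zero =>
      simp only [pow_zero, one_mul]
      nlinarith [hy 0, mul_nonneg hc0 (hy 0)]
    | succ n ih =>
      have h1 := hrec_a n
      have h2 := hrec_y n
      have h2' : c * y (n + 1) ≤ c * (p * a n + (1 - p) * y n) :=
        mul_le_mul_of_nonneg_left h2 hc0
      have step : a (n + 1) + c * y (n + 1) ≤ (1 - η) * (a n + c * y n) := by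
        nlinarith [ha n, hy n, mul_nonneg (ha n) hη0.le]
      calc a (n + 1) + c * y (n + 1) ≤ (1 - η) * (a n + c * y n) := step
        _ ≤ (1 - η) * ((1 - η) ^ n * (a 0 + y 0)) :=
            mul_le_mul_of_nonneg_left ih hη1
        _ = (1 - η) ^ (n + 1) * (a 0 + y 0) := by ring
  intro t
  have := key t
  nlinarith [mul_nonneg hc0 (hy t)]
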